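/- Let G be an abelian continuous semigroup on a topological space X. Then the set Ω_S(G) of strongly nonwandering points for G is an invariant subset of X. -/
import Mathlib


/-- `x` is a strongly nonwandering point for a semigroup `G`: for every neighborhood `U` of
`x` and every `g ∈ G` there is `h ∈ Ĝ = G ∪ {identity}` with `(h ∘ g)(U) ∩ U ≠ ∅`. -/
def StronglyNonwandering {X : Type*} [TopologicalSpace X] (G : Set (X → X)) (x : X) : Prop :=
  ∀ U ∈ nhds x, ∀ g ∈ G, ∃ h ∈ G ∪ {(id : X → X)}, (((h ∘ g) '' U) ∩ U).Nonempty

/-- If `G` is an abelian continuous semigroup on a topological space `X`, then the set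
`Ω_S(G)` of strongly nonwandering points is an invariant subset of `X`. -/
theorem stronglyNonwandering_invariant {X : Type*} [TopologicalSpace X] (G : Set (X → X))
    (hcont : ∀ g ∈ G, Continuous g)
    (hcomp : ∀ g ∈ G, ∀ h ∈ G, g ∘ h ∈ G)
    (habel : ∀ g ∈ G, ∀ h ∈ G, g ∘ h = h ∘ g) :
    ∀ g ∈ G, ∀ x ∈ {x | StronglyNonwandering G x}, g x ∈ {x | StronglyNonwandering G x} := by
  intro g hg x hx
  intro U hU k hk
  have hV : g ⁻¹' U ∈ nhds x := (hcont g hg).continuousAt.preimage_mem_nhds hU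
  obtain ⟨h, hh, y, ⟨z, hzV, hzy⟩, hyV⟩ := hx (g ⁻¹' U) hV (k ∘ g) (hcomp k hk g hg)
  rcases hh with hhG | hid
  · refine ⟨g ∘ h, Or.inl (hcomp g hg h hhG), g y, ⟨g z, hzV, ?_⟩, hyV⟩
    simp only [Function.comp_apply] at hzy ⊢
    rw [hzy]
  · refine ⟨g, Or.inl hg, g y, ⟨g z, hzV, ?_⟩, hyV⟩
    simp only [Set.mem_singleton_iff] at hid
    subst hid
    simp only [Function.comp_apply, id] at hzy ⊢
    rw [hzy]
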